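/- arXiv:2504.09342 — 3 statements merged into one kernel-verified Lean document; each statement's English description precedes it below -/
import Mathlib

section
/- For every real x̄ ≥ 0, the supremum over γ ∈ [0,∞) of f(γ) = x̄·γ/(1+γ) − log(1+γ) equals φ(max(x̄,1)) = max(x̄,1) − 1 − log(max(x̄,1)); moreover the supremum is attained, at γ = x̄ − 1 when x̄ ≥ 1 and at γ = 0 when x̄ ≤ 1. -/
open Set Real

/-- The supremum over `γ ∈ [0,∞)` of
`f(γ) = x̄·γ/(1+γ) − log(1+γ)` equals `φ(max(x̄,1)) = max(x̄,1) − 1 − log(max(x̄,1))`,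
and it is attained at `γ = x̄ − 1` when `x̄ ≥ 1` and at `γ = 0` when `x̄ ≤ 1`. -/
theorem snr_maximization (x : ℝ) (hx : 0 ≤ x) :
    IsGreatest ((fun γ : ℝ => x * γ / (1 + γ) - Real.log (1 + γ)) '' Set.Ici 0)
      (max x 1 - 1 - Real.log (max x 1)) ∧
    (1 ≤ x →
      x * (x - 1) / (1 + (x - 1)) - Real.log (1 + (x - 1))
        = max x 1 - 1 - Real.log (max x 1)) ∧
    (x ≤ 1 →
      x * 0 / (1 + 0) - Real.log (1 + 0) = max x 1 - 1 - Real.log (max x 1)) := by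
  have key : ∀ u : ℝ, 0 < u → 1 - u⁻¹ ≤ Real.log u := by
    intro u hu
    have h := Real.log_le_sub_one_of_pos (inv_pos.mpr hu)
    rw [Real.log_inv] at h
    linarith
  have hge : ∀ h1x : 1 ≤ x,
      x * (x - 1) / (1 + (x - 1)) - Real.log (1 + (x - 1))
        = max x 1 - 1 - Real.log (max x 1) := by
    intro h1x
    have hx0 : (0:ℝ) < x := lt_of_lt_of_le one_pos h1x
    rw [max_eq_left h1x]
    have : (1 : ℝ) + (x - 1) = x := by ring
    rw [this]
    field_simp
  have hle : ∀ _ : x ≤ 1,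
      x * 0 / (1 + 0) - Real.log (1 + 0) = max x 1 - 1 - Real.log (max x 1) := by
    intro h1x
    rw [max_eq_right h1x]
    simp
  refine ⟨⟨?_, ?_⟩, hge, hle⟩
  · rcases le_or_gt 1 x with h1x | h1x
    · exact ⟨x - 1, by simp; linarith, hge h1x⟩
    · exact ⟨0, by simp, hle h1x.le⟩
  · rintro y ⟨γ, hγ, rfl⟩
    have hγ0 : (0:ℝ) ≤ γ := hγ
    have h1 : (0:ℝ) < 1 + γ := by linarith
    rcases le_or_gt 1 x with h1x | h1x
    · have hx0 : (0:ℝ) < x := lt_of_lt_of_le one_pos h1x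
      rw [max_eq_left h1x]
      have hk := key ((1 + γ) / x) (div_pos h1 hx0)
      rw [Real.log_div h1.ne' hx0.ne'] at hk
      have hinv : ((1 + γ) / x)⁻¹ = x / (1 + γ) := by
        rw [inv_div]
      rw [hinv] at hk
      have heq : x * γ / (1 + γ) = x - x / (1 + γ) := by
        field_simp
        ring
      simp only [heq]
      linarith
    · rw [max_eq_right h1x.le]
      simp only [Real.log_one]
      show x * γ / (1 + γ) - Real.log (1 + γ) ≤ 1 - 1 - 0
      have hk := key (1 + γ) h1
      have h2 : x * γ / (1 + γ) ≤ γ / (1 + γ) := by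
        gcongr
        nlinarith
      have h3 : γ / (1 + γ) = 1 - (1 + γ)⁻¹ := by
        field_simp
        ring
      linarith
end

section
/- Fix constants 0 < α₀ < β₀ < 1 and γ > 0, and reals α, β with 0 ≤ α < β ≤ 1, α ≤ β₀ and β ≥ α₀. Let (E_n)_{n∈ℕ} be i.i.d. random variables, each exponentially distributed with mean 1. For each N define X^{(N)}_n = (1+γ)·E_n if ⌊α₀N⌋ ≤ n < ⌊β₀N⌋ and X^{(N)}_n = E_n otherwise, and for N large enough that ⌊αN⌋ < ⌊βN⌋ set X̄_N = (1/(⌊βN⌋−⌊αN⌋)) Σ_{n=⌊αN⌋}^{⌊βN⌋−1} X^{(N)}_n. Then X̄_N converges almost surely to Z(α,β) = 1 + γ·(min(β₀,β) − max(α₀,α))/(β − α) as N → ∞. -/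
open Finset Real MeasureTheory Filter
open scoped ENNReal NNReal

section Aux

open ProbabilityTheory

lemma exp1_ae_nonneg : ∀ᵐ x ∂(expMeasure 1), (0:ℝ) ≤ x := by
  rw [ae_iff]
  have h : {x : ℝ | ¬ (0:ℝ) ≤ x} = Set.Iio 0 := by ext x; simp [not_le]
  rw [h, expMeasure, gammaMeasure, withDensity_apply _ measurableSet_Iio]
  exact lintegral_gammaPDF_of_nonpos le_rfl

lemma exp1_f_eq : (fun x : ℝ => if 0 ≤ x then x * Real.exp (-x) else 0)
    = Set.indicator (Set.Ici 0) (fun x : ℝ => x * Real.exp (-x)) := by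
  funext x
  by_cases h : (0:ℝ) ≤ x <;> simp [Set.indicator_apply, h]

lemma exp1_f_integrable :
    Integrable (fun x : ℝ => if 0 ≤ x then x * Real.exp (-x) else 0) := by
  have h1 : IntegrableOn (fun x : ℝ => Real.exp (-x) * x ^ ((2:ℝ) - 1)) (Set.Ioi 0) :=
    Real.GammaIntegral_convergent (by norm_num)
  have h2 : IntegrableOn (fun x : ℝ => x * Real.exp (-x)) (Set.Ioi 0) := by
    have : (fun x : ℝ => Real.exp (-x) * x ^ ((2:ℝ) - 1))
        = fun x : ℝ => x * Real.exp (-x) := by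
      funext x
      rw [show (2:ℝ) - 1 = 1 by norm_num, Real.rpow_one, mul_comm]
    rwa [this] at h1
  rw [exp1_f_eq]
  exact (Iff.mpr integrableOn_Ici_iff_integrableOn_Ioi h2).integrable_indicator measurableSet_Ici

lemma exp1_f_integral :
    ∫ x : ℝ, (if 0 ≤ x then x * Real.exp (-x) else 0) = 1 := by
  rw [exp1_f_eq, integral_indicator measurableSet_Ici, integral_Ici_eq_integral_Ioi]
  have h := Real.integral_rpow_mul_exp_neg_mul_Ioi (a := 2) (r := 1) (by norm_num) one_pos
  simp only [show (2:ℝ) - 1 = 1 by norm_num, Real.rpow_one, one_mul, Real.Gamma_two,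
    one_div, inv_one, Real.one_rpow] at h
  rw [← h]

lemma exp1_lintegral : ∫⁻ x, ENNReal.ofReal x ∂(expMeasure 1) = 1 := by
  have hf : Measurable (gammaPDF 1 1) := (measurable_gammaPDFReal 1 1).ennreal_ofReal
  rw [expMeasure, gammaMeasure,
    lintegral_withDensity_eq_lintegral_mul _ hf ENNReal.measurable_ofReal]
  have heq : ∀ x : ℝ, (gammaPDF 1 1 * fun x => ENNReal.ofReal x) x
      = ENNReal.ofReal (if 0 ≤ x then x * Real.exp (-x) else 0) := by
    intro x
    simp only [Pi.mul_apply, gammaPDF_eq]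
    split_ifs with h
    · rw [← ENNReal.ofReal_mul (by positivity)]
      congr 1
      simp [Real.Gamma_one, Real.rpow_one, sub_self, Real.rpow_zero]
      ring
    · simp
  rw [lintegral_congr heq, ← ofReal_integral_eq_lintegral_ofReal exp1_f_integrable
    (Filter.Eventually.of_forall fun x => by
      simp only [Pi.zero_apply]
      split_ifs with h
      · positivity
      · exact le_rfl), exp1_f_integral, ENNReal.ofReal_one]

lemma exp1_integrable_id : Integrable (id : ℝ → ℝ) (expMeasure 1) := by
  refine ⟨aestronglyMeasurable_id, ?_⟩
  rw [HasFiniteIntegral]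
  simp only [id_eq]
  have : ∫⁻ x, ‖x‖ₑ ∂(expMeasure 1) = ∫⁻ x, ENNReal.ofReal x ∂(expMeasure 1) :=
    lintegral_congr_ae (exp1_ae_nonneg.mono fun x hx => Real.enorm_eq_ofReal hx)
  rw [this, exp1_lintegral]
  exact ENNReal.one_lt_top

lemma exp1_integral_id : ∫ x, x ∂(expMeasure 1) = 1 := by
  rw [integral_eq_lintegral_of_nonneg_ae exp1_ae_nonneg aestronglyMeasurable_id, exp1_lintegral]
  simp

/-- Deterministic window lemma. -/
lemma window_tendsto (s : ℕ → ℝ) (h0 : s 0 = 0)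
    (hs : Tendsto (fun n : ℕ => s n / n) atTop (nhds 1)) {c : ℝ} (hc : 0 ≤ c) :
    Tendsto (fun N : ℕ => s ⌊c * N⌋₊ / N) atTop (nhds c) := by
  rcases hc.eq_or_lt with rfl | hc'
  · simp only [zero_mul, Nat.floor_zero, h0, zero_div]
    exact tendsto_const_nhds
  · have hfl : Tendsto (fun N : ℕ => ⌊c * (N:ℝ)⌋₊) atTop atTop :=
      tendsto_nat_floor_mul_atTop c hc'
    have h1 : Tendsto (fun N : ℕ => s ⌊c * (N:ℝ)⌋₊ / (⌊c * (N:ℝ)⌋₊ : ℝ)) atTop (nhds 1) :=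
      hs.comp hfl
    have h2 : Tendsto (fun N : ℕ => (⌊c * (N:ℝ)⌋₊ : ℝ) / N) atTop (nhds c) :=
      (tendsto_nat_floor_mul_div_atTop hc).comp tendsto_natCast_atTop_atTop
    have h3 := h1.mul h2
    rw [one_mul] at h3
    refine h3.congr' ?_
    filter_upwards [hfl.eventually_gt_atTop 0, eventually_gt_atTop 0] with N hN hN'
    have ha : ((⌊c * (N:ℝ)⌋₊ : ℝ)) ≠ 0 := (Nat.cast_pos.mpr hN).ne'
    have hb : ((N:ℕ):ℝ) ≠ 0 := (Nat.cast_pos.mpr hN').ne'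
    field_simp

end Aux

/-- Strong law for interval averages: with i.i.d. unit-mean exponential
noise scaled by `1+γ` on `[⌊α₀N⌋, ⌊β₀N⌋)`, the average of the observations over
`[⌊αN⌋, ⌊βN⌋)` converges almost surely to
`Z(α,β) = 1 + γ·(min(β₀,β) − max(α₀,α))/(β − α)`. -/
theorem interval_average_limit
    {Ω : Type*} [MeasurableSpace Ω] (P : Measure Ω) [IsProbabilityMeasure P]
    (α₀ β₀ γ : ℝ) (h0 : 0 < α₀) (h1 : α₀ < β₀) (h2 : β₀ < 1) (hγ : 0 < γ)
    (α β : ℝ) (hα : 0 ≤ α) (hαβ : α < β) (hβ : β ≤ 1)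
    (hαβ₀ : α ≤ β₀) (hβα₀ : α₀ ≤ β)
    (E : ℕ → Ω → ℝ)
    (hmeas : ∀ n, Measurable (E n))
    (hindep : ProbabilityTheory.iIndepFun E P)
    (hdist : ∀ n, Measure.map (E n) P = ProbabilityTheory.expMeasure 1) :
    ∀ᵐ ω ∂P, Filter.Tendsto
      (fun N : ℕ =>
        (∑ n ∈ Finset.Ico ⌊α * N⌋₊ ⌊β * N⌋₊,
            (if ⌊α₀ * N⌋₊ ≤ n ∧ n < ⌊β₀ * N⌋₊ then (1 + γ) * E n ω else E n ω)) /
          ((⌊β * N⌋₊ - ⌊α * N⌋₊ : ℕ) : ℝ))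
      Filter.atTop
      (nhds (1 + γ * (min β₀ β - max α₀ α) / (β - α))) := by
  -- basic positivity facts
  have hβpos : 0 < β := lt_of_le_of_lt hα hαβ
  have hβα : (0:ℝ) < β - α := sub_pos.mpr hαβ
  have hmax_nonneg : 0 ≤ max α α₀ := le_trans hα (le_max_left _ _)
  have hmin_nonneg : 0 ≤ min β β₀ := le_min hβpos.le (h0.trans h1).le
  have hmaxmin : max α α₀ ≤ min β β₀ :=
    max_le (le_min hαβ.le hαβ₀) (le_min hβα₀ h1.le)
  -- strong law of large numbers
  have hint : Integrable (E 0) P := by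
    have h := (integrable_map_measure aestronglyMeasurable_id (hmeas 0).aemeasurable).mp
      (by rw [hdist 0]; exact exp1_integrable_id)
    exact h
  have hid : ∀ i, ProbabilityTheory.IdentDistrib (E i) (E 0) P P := fun i =>
    ⟨(hmeas i).aemeasurable, (hmeas 0).aemeasurable, by rw [hdist i, hdist 0]⟩
  have hpair : Pairwise (Function.onFun (ProbabilityTheory.IndepFun · · P) E) :=
    fun i j hij => hindep.indepFun hij
  have hmean : ∫ ω, E 0 ω ∂P = 1 := by
    have h := integral_map (μ := P) (φ := E 0) (hmeas 0).aemeasurable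
      (f := (id : ℝ → ℝ)) aestronglyMeasurable_id
    rw [hdist 0] at h
    simp only [id_eq] at h
    rw [exp1_integral_id] at h
    exact h.symm
  have hslln := ProbabilityTheory.strong_law_ae_real E hint hpair hid
  rw [hmean] at hslln
  -- pointwise argument
  filter_upwards [hslln] with ω hω
  set s : ℕ → ℝ := fun n => ∑ i ∈ Finset.range n, E i ω with hs_def
  have hs0 : s 0 = 0 := by simp [hs_def]
  -- window limits
  have hA := window_tendsto s hs0 hω hα
  have hB := window_tendsto s hs0 hω hβpos.le
  have hC := window_tendsto s hs0 hω hmax_nonneg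
  have hD := window_tendsto s hs0 hω hmin_nonneg
  -- numerator limit
  have hnum : Tendsto (fun N : ℕ =>
      (s ⌊β * N⌋₊ - s ⌊α * N⌋₊ + γ * (s ⌊min β β₀ * N⌋₊ - s ⌊max α α₀ * N⌋₊)) / N)
      atTop (nhds (β - α + γ * (min β β₀ - max α α₀))) := by
    have h := (hB.sub hA).add ((hD.sub hC).const_mul γ)
    refine h.congr fun N => ?_
    ring
  -- denominator limit
  have hden : Tendsto (fun N : ℕ => ((⌊β * N⌋₊ - ⌊α * N⌋₊ : ℕ) : ℝ) / N)
      atTop (nhds (β - α)) := by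
    have h2 : Tendsto (fun N : ℕ => (⌊β * (N:ℝ)⌋₊ : ℝ) / N) atTop (nhds β) :=
      (tendsto_nat_floor_mul_div_atTop hβpos.le).comp tendsto_natCast_atTop_atTop
    have h1 : Tendsto (fun N : ℕ => (⌊α * (N:ℝ)⌋₊ : ℝ) / N) atTop (nhds α) :=
      (tendsto_nat_floor_mul_div_atTop hα).comp tendsto_natCast_atTop_atTop
    have h := h2.sub h1
    refine h.congr fun N => ?_
    rw [Nat.cast_sub (Nat.floor_mono (mul_le_mul_of_nonneg_right hαβ.le (Nat.cast_nonneg N)))]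
    ring
  have hfin := hnum.div hden hβα.ne'
  -- eventual equality with the original expression
  have hev : ∀ᶠ N : ℕ in atTop, ⌊α * (N:ℝ)⌋₊ < ⌊β * (N:ℝ)⌋₊ := by
    have h := Filter.Tendsto.const_mul_atTop hβα (tendsto_natCast_atTop_atTop (R := ℝ))
    filter_upwards [h.eventually_gt_atTop 1] with N hN
    have hfl1 : (⌊α * (N:ℝ)⌋₊ : ℝ) ≤ α * N := Nat.floor_le (mul_nonneg hα (Nat.cast_nonneg N))
    have hfl2 : β * (N:ℝ) - 1 < ⌊β * (N:ℝ)⌋₊ := Nat.sub_one_lt_floor _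
    have : (⌊α * (N:ℝ)⌋₊ : ℝ) < ⌊β * (N:ℝ)⌋₊ := by nlinarith
    exact_mod_cast this
  have heq : ∀ᶠ N : ℕ in atTop,
      (∑ n ∈ Finset.Ico ⌊α * N⌋₊ ⌊β * N⌋₊,
          (if ⌊α₀ * N⌋₊ ≤ n ∧ n < ⌊β₀ * N⌋₊ then (1 + γ) * E n ω else E n ω)) /
        ((⌊β * N⌋₊ - ⌊α * N⌋₊ : ℕ) : ℝ)
      = (s ⌊β * N⌋₊ - s ⌊α * N⌋₊ + γ * (s ⌊min β β₀ * N⌋₊ - s ⌊max α α₀ * N⌋₊)) / N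
        / (((⌊β * N⌋₊ - ⌊α * N⌋₊ : ℕ) : ℝ) / N) := by
    filter_upwards [hev, eventually_gt_atTop 0] with N hN hN'
    have hsum : (∑ n ∈ Finset.Ico ⌊α * (N:ℝ)⌋₊ ⌊β * (N:ℝ)⌋₊,
        (if ⌊α₀ * (N:ℝ)⌋₊ ≤ n ∧ n < ⌊β₀ * (N:ℝ)⌋₊ then (1 + γ) * E n ω else E n ω))
        = s ⌊β * N⌋₊ - s ⌊α * N⌋₊ + γ * (s ⌊min β β₀ * N⌋₊ - s ⌊max α α₀ * N⌋₊) := by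
      have hsplit : ∀ n, (if ⌊α₀ * (N:ℝ)⌋₊ ≤ n ∧ n < ⌊β₀ * (N:ℝ)⌋₊ then (1 + γ) * E n ω
          else E n ω) = E n ω + (if n ∈ Finset.Ico ⌊α₀ * (N:ℝ)⌋₊ ⌊β₀ * (N:ℝ)⌋₊
            then γ * E n ω else 0) := by
        intro n
        simp only [Finset.mem_Ico]
        split_ifs <;> ring
      rw [Finset.sum_congr rfl fun n _ => hsplit n, Finset.sum_add_distrib,
        Finset.sum_ite_mem, Finset.Ico_inter_Ico]
      have hmax' : max ⌊α * (N:ℝ)⌋₊ ⌊α₀ * (N:ℝ)⌋₊ = ⌊max α α₀ * (N:ℝ)⌋₊ := by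
        rw [max_mul_of_nonneg _ _ (Nat.cast_nonneg N : (0:ℝ) ≤ N)]
        exact (Nat.floor_mono.map_max).symm
      have hmin' : min ⌊β * (N:ℝ)⌋₊ ⌊β₀ * (N:ℝ)⌋₊ = ⌊min β β₀ * (N:ℝ)⌋₊ := by
        rw [min_mul_of_nonneg _ _ (Nat.cast_nonneg N : (0:ℝ) ≤ N)]
        exact (Nat.floor_mono.map_min).symm
      rw [hmax', hmin', ← Finset.mul_sum,
        Finset.sum_Ico_eq_sub _ (Nat.floor_mono
          (mul_le_mul_of_nonneg_right hαβ.le (Nat.cast_nonneg N))),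
        Finset.sum_Ico_eq_sub _ (Nat.floor_mono
          (mul_le_mul_of_nonneg_right hmaxmin (Nat.cast_nonneg N)))]
    rw [hsum]
    have hd : ((⌊β * (N:ℝ)⌋₊ - ⌊α * (N:ℝ)⌋₊ : ℕ) : ℝ) ≠ 0 :=
      Nat.cast_ne_zero.mpr (Nat.sub_ne_zero_of_lt hN)
    have hNne : ((N:ℕ):ℝ) ≠ 0 := (Nat.cast_pos.mpr hN').ne'
    field_simp
  have hval : (1 : ℝ) + γ * (min β₀ β - max α₀ α) / (β - α)
      = (β - α + γ * (min β β₀ - max α α₀)) / (β - α) := by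
    rw [min_comm β₀ β, max_comm α₀ α]
    field_simp
  rw [hval]
  exact hfin.congr' (heq.mono fun N h => h.symm)
end

section
/- Let c > 0, δ > 0, x* ∈ ℝ, and x ∈ ℝ with |x − x*| ≤ 2δ. Let f and g be real-valued functions defined at the three points x − δ, x, and x + δ. Assume: (i) for any two of these points u < v with v ≤ x*, f(v) − f(u) ≥ c·(v − u); (ii) for any two of these points u < v with u ≥ x*, f(u) − f(v) ≥ c·(v − u); and (iii) |g(y) − f(y)| < c·δ/2 for each y ∈ {x − δ, x, x + δ}. Then every maximizer x̂ of g over the three points {x − δ, x, x + δ} satisfies |x̂ − x*| ≤ δ. -/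
/-- One-step boundary tracking: if `f` has a triangular maximum at `x*`
with constant `c` on the three grid points `{x−δ, x, x+δ}`, `|x − x*| ≤ 2δ`, and `g`
approximates `f` to within `c·δ/2` on these points, then any maximizer of `g` over the
three points is within `δ` of `x*`. -/
theorem boundary_tracking_step
    (c δ xstar x : ℝ) (hc : 0 < c) (hδ : 0 < δ)
    (hx : |x - xstar| ≤ 2 * δ)
    (f g : ℝ → ℝ)
    (hup : ∀ u ∈ ({x - δ, x, x + δ} : Set ℝ), ∀ v ∈ ({x - δ, x, x + δ} : Set ℝ),
      u < v → v ≤ xstar → c * (v - u) ≤ f v - f u)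
    (hdown : ∀ u ∈ ({x - δ, x, x + δ} : Set ℝ), ∀ v ∈ ({x - δ, x, x + δ} : Set ℝ),
      u < v → xstar ≤ u → c * (v - u) ≤ f u - f v)
    (happrox : ∀ y ∈ ({x - δ, x, x + δ} : Set ℝ), |g y - f y| < c * δ / 2) :
    ∀ xhat ∈ ({x - δ, x, x + δ} : Set ℝ),
      (∀ y ∈ ({x - δ, x, x + δ} : Set ℝ), g y ≤ g xhat) →
      |xhat - xstar| ≤ δ := by
  have ha : (x - δ) ∈ ({x - δ, x, x + δ} : Set ℝ) := by simp
  have hb : x ∈ ({x - δ, x, x + δ} : Set ℝ) := by simp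
  have hd : (x + δ) ∈ ({x - δ, x, x + δ} : Set ℝ) := by simp
  have ea := happrox _ ha; rw [abs_lt] at ea
  have eb := happrox _ hb; rw [abs_lt] at eb
  have ed := happrox _ hd; rw [abs_lt] at ed
  rw [abs_le] at hx
  intro xhat hxhat hmax
  by_contra h
  push_neg at h
  rcases lt_abs.mp h with h1 | h1
  all_goals rcases hxhat with rfl | rfl | rfl
  -- xhat = x - δ, x - δ - xstar > δ : impossible since x - xstar ≤ 2δ
  · linarith
  -- xhat = x, x - xstar > δ : use hdown on (x-δ, x)
  · have := hdown _ ha _ hb (by linarith) (by linarith)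
    have := hmax _ ha
    linarith
  -- xhat = x + δ, use hdown on (x, x+δ)
  · have := hdown _ hb _ hd (by linarith) (by linarith)
    have := hmax _ hb
    linarith
  -- now h1 : δ < -(xhat - xstar), i.e. xhat < xstar - δ
  -- xhat = x - δ : use hup on (x-δ, x)
  · have := hup _ ha _ hb (by linarith) (by linarith)
    have := hmax _ hb
    linarith
  -- xhat = x : use hup on (x, x+δ)
  · have := hup _ hb _ hd (by linarith) (by linarith)
    have := hmax _ hd
    linarith
  -- xhat = x + δ : impossible since x - xstar ≥ -2δ
  · linarith
end
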